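/- Let ε ∈ (0,1) and define Φ_ε'(u) = (2−ε)u for |u| ≤ 1, Φ_ε'(u) = ((2−ε)/ε)(1+ε−u) for 1 ≤ u ≤ 1+ε, Φ_ε'(u) = ((ε−2)/ε)(1+ε+u) for −1−ε ≤ u ≤ −1, and Φ_ε'(u) = 0 for |u| ≥ 1+ε. Then u_ε(t,x) = (1−ε)cos(√(2−ε) t) and v_ε(t,x) = 1+ε both solve ∂²_tt w = ∂²_xx w − Φ_ε'(w) with Neumann boundary conditions on (0,L), with initial data (1−ε, 0) and (1+ε, 0) respectively. As ε → 0, u_ε → cos(√2 t) and v_ε → 1 pointwise, giving two distinct limit solutions with the same limiting initial data u₀ ≡ 1, u₁ ≡ 0. -/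

import Mathlib

open Set Real Filter

noncomputable section

/-- The regularized stress Φ_ε'. -/
def PhiEps' (ε u : ℝ) : ℝ :=
  if |u| ≤ 1 then (2 - ε) * u
  else if 1 ≤ u ∧ u ≤ 1 + ε then ((2 - ε) / ε) * (1 + ε - u)
  else if -1 - ε ≤ u ∧ u ≤ -1 then ((ε - 2) / ε) * (1 + ε + u)
  else 0

def d2t (u : ℝ → ℝ → ℝ) (t x : ℝ) : ℝ := deriv (fun s => deriv (fun r => u r x) s) t
def d2x (u : ℝ → ℝ → ℝ) (t x : ℝ) : ℝ := deriv (fun y => deriv (fun z => u t z) y) x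

lemma hd1 (ε s : ℝ) :
    HasDerivAt (fun r => (1 - ε) * Real.cos (Real.sqrt (2 - ε) * r))
      ((-((1-ε) * Real.sqrt (2-ε))) * Real.sin (Real.sqrt (2-ε) * s)) s := by
  have h := (((Real.hasDerivAt_cos (Real.sqrt (2-ε) * s)).comp s
    ((hasDerivAt_id s).const_mul (Real.sqrt (2-ε)))).const_mul (1-ε))
  refine h.congr_deriv ?_
  simp; ring

lemma hd1' (ε : ℝ) :
    (fun s => deriv (fun r => (1 - ε) * Real.cos (Real.sqrt (2 - ε) * r)) s)
      = fun s => (-((1-ε) * Real.sqrt (2-ε))) * Real.sin (Real.sqrt (2-ε) * s) :=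
  funext fun s => (hd1 ε s).deriv

lemma hd2 (ε t : ℝ) :
    HasDerivAt (fun s => (-((1-ε) * Real.sqrt (2-ε))) * Real.sin (Real.sqrt (2-ε) * s))
      ((-((1-ε) * Real.sqrt (2-ε))) * (Real.cos (Real.sqrt (2-ε) * t) * Real.sqrt (2-ε))) t := by
  have h := (((Real.hasDerivAt_sin (Real.sqrt (2-ε) * t)).comp t
    ((hasDerivAt_id t).const_mul (Real.sqrt (2-ε)))).const_mul (-((1-ε) * Real.sqrt (2-ε))))
  refine h.congr_deriv ?_
  simp

/-- Example 3.4. Both u_ε(t,x) = (1−ε)cos(√(2−ε) t) and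
v_ε(t,x) = 1+ε solve the ε-regularized problem with Neumann conditions and
initial data (1−ε,0), (1+ε,0); as ε→0⁺ they converge to two distinct limit
solutions cos(√2 t) and 1 with the same limiting initial data u₀ ≡ 1, u₁ ≡ 0. -/
theorem nonuniqueness_by_initial_data_regularization (L : ℝ) (hL : 0 < L) :
    ∀ ε ∈ Ioo (0:ℝ) 1,
      (let u : ℝ → ℝ → ℝ := fun t _ => (1 - ε) * Real.cos (Real.sqrt (2 - ε) * t)
       let v : ℝ → ℝ → ℝ := fun _ _ => 1 + ε
       (∀ t x : ℝ, d2t u t x = d2x u t x - PhiEps' ε (u t x)) ∧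
       (∀ t x : ℝ, d2t v t x = d2x v t x - PhiEps' ε (v t x)) ∧
       (∀ t : ℝ, deriv (fun y => u t y) 0 = 0 ∧ deriv (fun y => u t y) L = 0) ∧
       (∀ t : ℝ, deriv (fun y => v t y) 0 = 0 ∧ deriv (fun y => v t y) L = 0) ∧
       (∀ x : ℝ, u 0 x = 1 - ε ∧ deriv (fun s => u s x) 0 = 0) ∧
       (∀ x : ℝ, v 0 x = 1 + ε ∧ deriv (fun s => v s x) 0 = 0)) ∧
    -- pointwise convergence as ε → 0⁺ to two distinct limits
    (∀ t x : ℝ, Tendsto (fun ε => (1 - ε) * Real.cos (Real.sqrt (2 - ε) * t))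
        (nhdsWithin 0 (Ioi 0)) (nhds (Real.cos (Real.sqrt 2 * t)))) ∧
    (∀ t x : ℝ, Tendsto (fun ε => (1:ℝ) + ε) (nhdsWithin 0 (Ioi 0)) (nhds 1)) ∧
    (fun t (_ : ℝ) => Real.cos (Real.sqrt 2 * t)) ≠ (fun (_ _ : ℝ) => (1:ℝ)) ∧
    -- the limiting initial data coincide: u₀ ≡ 1, u₁ ≡ 0
    (Tendsto (fun ε => (1:ℝ) - ε) (nhdsWithin 0 (Ioi 0)) (nhds 1) ∧
     Tendsto (fun ε => (1:ℝ) + ε) (nhdsWithin 0 (Ioi 0)) (nhds 1)) := by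
  intro ε hε
  obtain ⟨hε0, hε1⟩ := hε
  refine ⟨?_, ?_, ?_, ?_, ?_, ?_⟩
  ·
    have h2ε : (0:ℝ) ≤ 2 - ε := by linarith
    have hsq : Real.sqrt (2-ε) * Real.sqrt (2-ε) = 2 - ε := Real.mul_self_sqrt h2ε
    refine ⟨?_, ?_, ?_, ?_, ?_, ?_⟩
    · intro t x
      have habs : |(1 - ε) * Real.cos (Real.sqrt (2 - ε) * t)| ≤ 1 := by
        rw [abs_mul]
        calc |1 - ε| * |Real.cos (Real.sqrt (2 - ε) * t)| ≤ 1 * 1 := by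
              apply mul_le_mul
              · rw [abs_of_nonneg (by linarith)]; linarith
              · exact Real.abs_cos_le_one _
              · exact abs_nonneg _
              · norm_num
          _ = 1 := by norm_num
      have hphi : PhiEps' ε ((1 - ε) * Real.cos (Real.sqrt (2 - ε) * t))
          = (2 - ε) * ((1 - ε) * Real.cos (Real.sqrt (2 - ε) * t)) := by
        rw [PhiEps', if_pos habs]
      simp only [d2t, d2x, deriv_const, hphi]
      rw [hd1' ε, (hd2 ε t).deriv]
      linear_combination (-(1 - ε) * Real.cos (Real.sqrt (2 - ε) * t)) * hsq
    · intro t x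
      have hphi : PhiEps' ε (1 + ε) = 0 := by
        rw [PhiEps', if_neg, if_pos ⟨by linarith, le_refl _⟩]
        · ring
        · rw [abs_of_nonneg (by linarith)]; intro h; linarith
      simp [d2t, d2x, hphi]
    · intro t; exact ⟨deriv_const _ _, deriv_const _ _⟩
    · intro t; exact ⟨deriv_const _ _, deriv_const _ _⟩
    · intro x
      exact ⟨by simp, (hd1 ε 0).deriv.trans (by simp)⟩
    · intro x
      refine ⟨rfl, by simp⟩
  · intro t x
    have hc : Continuous (fun ε : ℝ => (1 - ε) * Real.cos (Real.sqrt (2 - ε) * t)) := by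
      apply Continuous.mul
      · continuity
      · exact Real.continuous_cos.comp
          ((Real.continuous_sqrt.comp (by continuity)).mul continuous_const)
    have h := hc.tendsto 0
    norm_num at h
    exact h.mono_left nhdsWithin_le_nhds
  · intro t x
    have hc : Continuous (fun ε : ℝ => (1:ℝ) + ε) := by continuity
    exact (hc.tendsto' 0 1 (by norm_num)).mono_left nhdsWithin_le_nhds
  · intro h
    have h1 := congrFun (congrFun h (Real.pi / Real.sqrt 2)) 0
    have hs2 : Real.sqrt 2 ≠ 0 := by positivity
    rw [mul_div_cancel₀ _ hs2] at h1
    rw [Real.cos_pi] at h1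
    norm_num at h1
  · have hc : Continuous (fun ε : ℝ => (1:ℝ) - ε) := by continuity
    exact (hc.tendsto' 0 1 (by norm_num)).mono_left nhdsWithin_le_nhds
  · have hc : Continuous (fun ε : ℝ => (1:ℝ) + ε) := by continuity
    exact (hc.tendsto' 0 1 (by norm_num)).mono_left nhdsWithin_le_nhds

end
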